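/- arXiv:math/0102190 — 2 statements merged into one kernel-verified Lean document; each statement's English description precedes it below -/
import Mathlib

section
/- With X₀ = -∑_{r=1}^{n-1} r E_{r+1,r} and Y₀ = ∑_{r=1}^{n-1} E_{r,r+1}, for any polynomial p of degree n with zero constant term, the determinant det(X₀ + p'(Y₀)) equals n! times the coefficient of z^n in the power series exp(p(z)). -/
open scoped BigOperators

/-- The base-point matrix `X₀ = -∑_{r=1}^{n-1} r E_{r+1,r}` (with 1-based indexing;
here `r : Fin (n-1)` runs over `0,…,n-2` so the summand is `(r+1) E_{r+2,r+1}`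
in 1-based terms, i.e. entry `(r+1, r)` in 0-based indexing with value `-(r+1)`). -/
noncomputable def X0 (n : ℕ) : Matrix (Fin n) (Fin n) ℂ :=
  -∑ r : Fin (n - 1), ((r : ℕ) + 1 : ℂ) •
    Matrix.single
      (⟨(r : ℕ) + 1, by have := r.isLt; omega⟩ : Fin n)
      (⟨(r : ℕ), by have := r.isLt; omega⟩ : Fin n) 1

/-- The base-point matrix `Y₀ = ∑_{r=1}^{n-1} E_{r,r+1}`. -/
noncomputable def Y0 (n : ℕ) : Matrix (Fin n) (Fin n) ℂ :=
  ∑ r : Fin (n - 1),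
    Matrix.single
      (⟨(r : ℕ), by have := r.isLt; omega⟩ : Fin n)
      (⟨(r : ℕ) + 1, by have := r.isLt; omega⟩ : Fin n) 1

/-! ### Auxiliary definitions -/

/-- `cc p k = k * pₖ`. -/
noncomputable def cc (p : Polynomial ℂ) (k : ℕ) : ℂ := (k : ℂ) * p.coeff k

/-- The Hessenberg matrix with subdiagonal entries `-i` and entry `c (j+1-i)` above. -/
noncomputable def Hm (c : ℕ → ℂ) (n : ℕ) : Matrix (Fin n) (Fin n) ℂ :=
  Matrix.of fun i j =>
    (if (i : ℕ) = (j : ℕ) + 1 then (-(i : ℕ) : ℂ) else 0) + c ((j : ℕ) + 1 - (i : ℕ))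

/-- `[zⁿ] exp(p)` truncated. -/
noncomputable def Ep (p : Polynomial ℂ) (n : ℕ) : ℂ :=
  ∑ k ∈ Finset.range (n + 1), (p ^ k).coeff n / (Nat.factorial k : ℂ)

lemma Hm_apply (c : ℕ → ℂ) (n : ℕ) (a b : Fin n) :
    Hm c n a b = (if (a : ℕ) = (b : ℕ) + 1 then (-((a : ℕ) : ℂ)) else 0)
      + c ((b : ℕ) + 1 - (a : ℕ)) := rfl

lemma Hm_congr (c : ℕ → ℂ) {n m : ℕ} (a b : Fin n) (a' b' : Fin m)
    (ha : (a : ℕ) = (a' : ℕ)) (hb : (b : ℕ) = (b' : ℕ)) :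
    Hm c n a b = Hm c m a' b' := by
  rw [Hm_apply, Hm_apply, ha, hb]

lemma coe_succAbove {n : ℕ} (i : Fin (n + 1)) (j : Fin n) :
    ((i.succAbove j : Fin (n + 1)) : ℕ) = if (j : ℕ) < (i : ℕ) then (j : ℕ) else (j : ℕ) + 1 := by
  rw [Fin.succAbove]
  split_ifs with h1 h2 h2
  · rfl
  · exact absurd (by exact_mod_cast h1) h2
  · exact absurd (by exact_mod_cast h2) h1
  · simp [Fin.val_succ]

lemma X0_apply (n : ℕ) (i j : Fin n) :
    X0 n i j = if (i : ℕ) = (j : ℕ) + 1 then (-(i : ℕ) : ℂ) else 0 := by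
  rw [X0, Matrix.neg_apply, Matrix.sum_apply]
  have key : ∀ b : Fin (n - 1),
      (((b : ℕ) + 1 : ℂ) • Matrix.single
        (⟨(b : ℕ) + 1, by have := b.isLt; omega⟩ : Fin n)
        (⟨(b : ℕ), by have := b.isLt; omega⟩ : Fin n) 1) i j =
      if (i : ℕ) = (b : ℕ) + 1 ∧ (j : ℕ) = (b : ℕ) then ((b : ℕ) + 1 : ℂ) else 0 := by
    intro b
    simp only [Matrix.smul_apply, Matrix.single, Matrix.of_apply, Fin.ext_iff]
    split_ifs with h1 h2 h2 <;> simp_all <;> omega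
  rw [Finset.sum_congr rfl fun b _ => key b]
  by_cases h : (i : ℕ) = (j : ℕ) + 1
  · have hj : (j : ℕ) < n - 1 := by have := i.isLt; omega
    rw [Finset.sum_eq_single (⟨(j : ℕ), hj⟩ : Fin (n - 1))]
    · simp [h]
    · intro b _ hb
      rw [if_neg]
      rintro ⟨h1, h2⟩
      exact hb (Fin.ext (show (b:ℕ) = (j:ℕ) from h2.symm))
    · intro h'; exact absurd (Finset.mem_univ _) h'
  · rw [if_neg h, Finset.sum_eq_zero fun b _ => if_neg (fun hb => h (by omega)), neg_zero]

lemma Y0_apply (n : ℕ) (i j : Fin n) :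
    Y0 n i j = if (j : ℕ) = (i : ℕ) + 1 then (1 : ℂ) else 0 := by
  rw [Y0, Matrix.sum_apply]
  have key : ∀ b : Fin (n - 1),
      (Matrix.single
        (⟨(b : ℕ), by have := b.isLt; omega⟩ : Fin n)
        (⟨(b : ℕ) + 1, by have := b.isLt; omega⟩ : Fin n) (1:ℂ)) i j =
      if (i : ℕ) = (b : ℕ) ∧ (j : ℕ) = (b : ℕ) + 1 then (1 : ℂ) else 0 := by
    intro b
    simp only [Matrix.single, Matrix.of_apply, Fin.ext_iff]
    split_ifs with h1 h2 h2 <;> simp_all <;> omega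
  rw [Finset.sum_congr rfl fun b _ => key b]
  by_cases h : (j : ℕ) = (i : ℕ) + 1
  · have hi : (i : ℕ) < n - 1 := by have := j.isLt; omega
    rw [Finset.sum_eq_single (⟨(i : ℕ), hi⟩ : Fin (n - 1))]
    · simp [h]
    · intro b _ hb
      rw [if_neg]
      rintro ⟨h1, h2⟩
      exact hb (Fin.ext (show (b:ℕ) = (i:ℕ) from h1.symm))
    · intro h'; exact absurd (Finset.mem_univ _) h'
  · rw [if_neg h, Finset.sum_eq_zero fun b _ => if_neg (fun hb => h (by omega))]

lemma Y0_pow_apply (n m : ℕ) (i j : Fin n) :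
    (Y0 n ^ m) i j = if (j : ℕ) = (i : ℕ) + m then (1 : ℂ) else 0 := by
  induction m generalizing i j with
  | zero => rw [pow_zero, Matrix.one_apply]; simp [Fin.ext_iff, eq_comm]
  | succ m ih =>
    rw [pow_succ, Matrix.mul_apply]
    have key : ∀ k : Fin n, (Y0 n ^ m) i k * Y0 n k j =
        if (k : ℕ) = (i : ℕ) + m ∧ (j : ℕ) = (k : ℕ) + 1 then (1:ℂ) else 0 := by
      intro k
      rw [ih, Y0_apply]
      split_ifs with h1 h2 h3 h3 h4 <;> simp_all
    rw [Finset.sum_congr rfl fun k _ => key k]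
    by_cases h : (j : ℕ) = (i : ℕ) + m + 1
    · have hk : (i : ℕ) + m < n := by have := j.isLt; omega
      rw [Finset.sum_eq_single (⟨(i : ℕ) + m, hk⟩ : Fin n)]
      · simp [h, show (i:ℕ)+m+1 = (i:ℕ)+(m+1) from by omega]
      · intro b _ hb
        rw [if_neg]
        rintro ⟨h1, h2⟩
        exact hb (Fin.ext (show (b:ℕ) = (i:ℕ) + m from h1))
      · intro h'; exact absurd (Finset.mem_univ _) h'
    · rw [if_neg (by omega), Finset.sum_eq_zero fun b _ => if_neg (fun hb => h (by omega))]

lemma aeval_Y0_apply (n : ℕ) (q : Polynomial ℂ) (i j : Fin n) :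
    (Polynomial.aeval (Y0 n) q) i j =
      if (i : ℕ) ≤ (j : ℕ) then q.coeff ((j : ℕ) - (i : ℕ)) else 0 := by
  rw [Polynomial.aeval_eq_sum_range, Matrix.sum_apply]
  have key : ∀ m, (q.coeff m • Y0 n ^ m) i j =
      if (j : ℕ) = (i : ℕ) + m then q.coeff m else 0 := by
    intro m
    rw [Matrix.smul_apply, Y0_pow_apply, smul_eq_mul]
    split_ifs <;> simp
  rw [Finset.sum_congr rfl fun m _ => key m]
  by_cases h : (i : ℕ) ≤ (j : ℕ)
  · rw [if_pos h]
    by_cases h2 : (j : ℕ) - (i : ℕ) < q.natDegree + 1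
    · rw [Finset.sum_eq_single_of_mem ((j : ℕ) - (i : ℕ)) (Finset.mem_range.mpr h2)]
      · rw [if_pos (by omega)]
      · intro b _ hb
        exact if_neg (fun hbb => hb (by omega))
    · rw [Finset.sum_eq_zero, Polynomial.coeff_eq_zero_of_natDegree_lt (by omega)]
      intro b hb
      rw [Finset.mem_range] at hb
      exact if_neg (by omega)
  · rw [if_neg h, Finset.sum_eq_zero fun b _ => if_neg (by omega)]

lemma matrix_eq_Hm (n : ℕ) (p : Polynomial ℂ) :
    X0 n + Polynomial.aeval (Y0 n) p.derivative = Hm (cc p) n := by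
  ext i j
  rw [Matrix.add_apply, X0_apply, aeval_Y0_apply, Hm, Matrix.of_apply]
  congr 1
  by_cases h : (i : ℕ) ≤ (j : ℕ)
  · rw [if_pos h, Polynomial.coeff_derivative, cc,
      show (j : ℕ) + 1 - (i : ℕ) = (j : ℕ) - (i : ℕ) + 1 from by omega]
    push_cast
    ring
  · rw [if_neg h, show (j : ℕ) + 1 - (i : ℕ) = 0 from by omega, cc]
    simp

lemma Hm_minor (c : ℕ → ℂ) (hc : c 0 = 0) :
    ∀ (n : ℕ) (i : Fin (n + 1)),
      ((Hm c (n + 1)).submatrix i.succAbove Fin.castSucc).det =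
        (∏ k ∈ Finset.Ioc (i : ℕ) n, (-(k : ℂ))) * (Hm c (i : ℕ)).det := by
  intro n
  induction n with
  | zero =>
    intro i
    have h0 : i = 0 := Fin.fin_one_eq_zero i
    subst h0
    simp [Matrix.det_fin_zero]
  | succ n ih =>
    intro i
    by_cases hlast : (i : ℕ) = n + 2 - 1
    · have hi : i = Fin.last (n + 1) := Fin.ext (by simpa using hlast)
      subst hi
      rw [Fin.succAbove_last]
      have hM : (Hm c (n + 2)).submatrix Fin.castSucc Fin.castSucc = Hm c (n + 1) := by
        ext a b
        exact Hm_congr c _ _ _ _ (by simp) (by simp)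
      rw [hM]
      simp [Fin.val_last, Finset.Ioc_self]
    · have hi : (i : ℕ) ≤ n := by have := i.isLt; simp at hlast; omega
      have hv : ((i.succAbove (Fin.last n)) : ℕ) = n + 1 := by
        rw [coe_succAbove, Fin.val_last, if_neg (by omega)]
      rw [Matrix.det_succ_row _ (Fin.last n), Finset.sum_eq_single (Fin.last n)]
      · -- main term
        have hentry : ((Hm c (n + 2)).submatrix i.succAbove Fin.castSucc) (Fin.last n)
            (Fin.last n) = -((n : ℂ) + 1) := by
          rw [Matrix.submatrix_apply, Hm_apply, hv, Fin.coe_castSucc, Fin.val_last,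
            if_pos rfl, show n + 1 - (n + 1) = 0 from by omega, hc]
          push_cast; ring
        rw [hentry]
        have hsub : ((Hm c (n + 2)).submatrix i.succAbove Fin.castSucc).submatrix
            (Fin.last n).succAbove (Fin.last n).succAbove =
            (Hm c (n + 1)).submatrix (⟨(i : ℕ), by omega⟩ : Fin (n + 1)).succAbove
              Fin.castSucc := by
          rw [Fin.succAbove_last, Matrix.submatrix_submatrix]
          ext a b
          refine Hm_congr c _ _ _ _ ?_ (by simp)
          simp only [Function.comp_apply, coe_succAbove, Fin.coe_castSucc]
        rw [hsub, ih]
        rw [Finset.prod_Ioc_succ_top hi (fun k => -(k : ℂ))]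
        rw [Fin.val_last, show ((-1 : ℂ)) ^ (n + n) = 1 from Even.neg_one_pow ⟨n, rfl⟩]
        push_cast
        ring
      · -- off terms
        intro j _ hj
        have hjn : (j : ℕ) < n := by
          have h1 : (j : ℕ) ≠ n := fun h => hj (Fin.ext (by simp [h]))
          have := j.isLt; omega
        have : ((Hm c (n + 2)).submatrix i.succAbove Fin.castSucc) (Fin.last n) j = 0 := by
          rw [Matrix.submatrix_apply, Hm_apply, hv, Fin.coe_castSucc,
            if_neg (by omega), show (j : ℕ) + 1 - (n + 1) = 0 from by omega, hc]
          ring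
        rw [this]; ring
      · intro h; exact absurd (Finset.mem_univ _) h

lemma Hm_det_succ (c : ℕ → ℂ) (hc : c 0 = 0) (n : ℕ) :
    (Hm c (n + 1)).det =
      ∑ i ∈ Finset.range (n + 1),
        c (n + 1 - i) * (∏ k ∈ Finset.Ioc i n, (k : ℂ)) * (Hm c i).det := by
  have step : ∀ i : Fin (n + 1),
      (-1 : ℂ) ^ ((i : ℕ) + ((Fin.last n : Fin (n + 1)) : ℕ)) * Hm c (n + 1) i (Fin.last n) *
        ((Hm c (n + 1)).submatrix i.succAbove (Fin.last n).succAbove).det =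
      c (n + 1 - (i : ℕ)) * (∏ k ∈ Finset.Ioc (i : ℕ) n, (k : ℂ)) * (Hm c (i : ℕ)).det := by
    intro i
    rw [Fin.succAbove_last, Hm_minor c hc n i, Fin.val_last]
    have hentry : Hm c (n + 1) i (Fin.last n) = c (n + 1 - (i : ℕ)) := by
      rw [Hm_apply, Fin.val_last, if_neg (by have := i.isLt; omega), zero_add]
    rw [hentry]
    have hprod : (∏ k ∈ Finset.Ioc (i : ℕ) n, (-(k : ℂ))) =
        (-1 : ℂ) ^ (n - (i : ℕ)) * ∏ k ∈ Finset.Ioc (i : ℕ) n, (k : ℂ) := by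
      simp only [neg_eq_neg_one_mul ((_ : ℕ) : ℂ)]
      rw [Finset.prod_mul_distrib, Finset.prod_const, Nat.card_Ioc]
    rw [hprod]
    have hsign : (-1 : ℂ) ^ ((i : ℕ) + n) * (-1 : ℂ) ^ (n - (i : ℕ)) = 1 := by
      rw [← pow_add, show (i : ℕ) + n + (n - (i : ℕ)) = 2 * n from by (have := i.isLt; omega),
        pow_mul]
      norm_num
    linear_combination
      (c (n + 1 - (i : ℕ)) * (∏ k ∈ Finset.Ioc (i : ℕ) n, (k : ℂ)) * (Hm c (i : ℕ)).det) * hsign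
  rw [Matrix.det_succ_column (Hm c (n + 1)) (Fin.last n),
    Finset.sum_congr rfl (fun i _ => step i),
    Fin.sum_univ_eq_sum_range
      (fun i => c (n + 1 - i) * (∏ k ∈ Finset.Ioc i n, (k : ℂ)) * (Hm c i).det) (n + 1)]

lemma coeff_pow_eq_zero {p : Polynomial ℂ} (hp0 : p.coeff 0 = 0) {m i : ℕ} (h : i < m) :
    (p ^ m).coeff i = 0 := by
  obtain ⟨r, hr⟩ := Polynomial.X_dvd_iff.mpr hp0
  rw [hr, mul_pow, mul_comm, Polynomial.coeff_mul_X_pow', if_neg (by omega)]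

lemma Ep_succ (p : Polynomial ℂ) (hp0 : p.coeff 0 = 0) (n : ℕ) :
    ((n : ℂ) + 1) * Ep p (n + 1) = ∑ i ∈ Finset.range (n + 1), cc p (n + 1 - i) * Ep p i := by
  have step1 : ((n : ℂ) + 1) * Ep p (n + 1) =
      ∑ k ∈ Finset.range (n + 2), ((n : ℂ) + 1) * (p ^ k).coeff (n + 1) / (Nat.factorial k : ℂ) := by
    rw [Ep, Finset.mul_sum]
    exact Finset.sum_congr rfl fun k _ => by ring
  have step2 : ∀ k : ℕ, ((n : ℂ) + 1) * (p ^ k).coeff (n + 1) =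
      (k : ℂ) * (p ^ (k - 1) * p.derivative).coeff n := by
    intro k
    have h1 : (Polynomial.derivative (p ^ k)).coeff n = (p ^ k).coeff (n + 1) * ((n : ℂ) + 1) :=
      Polynomial.coeff_derivative _ _
    rw [Polynomial.derivative_pow] at h1
    rw [mul_comm, ← h1, mul_assoc, Polynomial.coeff_C_mul]
  have step3 : ((n : ℂ) + 1) * Ep p (n + 1) =
      ∑ m ∈ Finset.range (n + 1), (p ^ m * p.derivative).coeff n / (Nat.factorial m : ℂ) := by
    rw [step1]
    rw [Finset.sum_range_succ' (fun k => ((n : ℂ) + 1) * (p ^ k).coeff (n + 1) / (Nat.factorial k : ℂ)) (n + 1)]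
    have h0 : ((n : ℂ) + 1) * (p ^ 0).coeff (n + 1) / (Nat.factorial 0 : ℂ) = 0 := by
      rw [step2]; simp
    rw [h0, add_zero]
    refine Finset.sum_congr rfl fun m _ => ?_
    rw [step2]
    have hm : ((m : ℂ) + 1) ≠ 0 := Nat.cast_add_one_ne_zero m
    have hfac : (Nat.factorial (m + 1) : ℂ) = ((m : ℂ) + 1) * (Nat.factorial m : ℂ) := by
      rw [Nat.factorial_succ]; push_cast; ring
    rw [show m + 1 - 1 = m from rfl, hfac]
    push_cast
    rw [mul_div_mul_left _ _ hm]
  have step4 : ∀ m, (p ^ m * p.derivative).coeff n =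
      ∑ i ∈ Finset.range (n + 1), (p ^ m).coeff i * cc p (n + 1 - i) := by
    intro m
    rw [Polynomial.coeff_mul,
      Finset.Nat.sum_antidiagonal_eq_sum_range_succ_mk
        (fun ij => (p ^ m).coeff ij.1 * p.derivative.coeff ij.2) n]
    refine Finset.sum_congr rfl fun i hi => ?_
    have hin : i ≤ n := by have := Finset.mem_range.mp hi; omega
    have hcast : ((n - i : ℕ) : ℂ) + 1 = ((n + 1 - i : ℕ) : ℂ) := by
      rw [Nat.cast_sub hin, Nat.cast_sub (by omega)]
      push_cast; ring
    rw [Polynomial.coeff_derivative, cc, show n - i + 1 = n + 1 - i from by omega, hcast]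
    ring
  rw [step3, Finset.sum_congr rfl (fun m _ => by rw [step4 m, Finset.sum_div]),
    Finset.sum_comm]
  refine Finset.sum_congr rfl fun i hi => ?_
  have hin : i ≤ n := by have := Finset.mem_range.mp hi; omega
  have hEp : Ep p i = ∑ m ∈ Finset.range (n + 1), (p ^ m).coeff i / (Nat.factorial m : ℂ) := by
    rw [Ep]
    refine (Finset.sum_subset (by intro x hx; simp at hx ⊢; omega) fun m _ hm => ?_)
    rw [coeff_pow_eq_zero hp0 (by simp at hm ⊢; omega), zero_div]
  rw [hEp, Finset.mul_sum]
  exact Finset.sum_congr rfl fun m _ => by ring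

lemma fact_prod : ∀ {n i : ℕ}, i ≤ n →
    (Nat.factorial i : ℂ) * ∏ k ∈ Finset.Ioc i n, (k : ℂ) = (Nat.factorial n : ℂ) := by
  intro n
  induction n with
  | zero => intro i hi; interval_cases i; simp
  | succ n ih =>
    intro i hi
    by_cases h2 : i = n + 1
    · subst h2; simp
    · rw [Finset.prod_Ioc_succ_top (by omega) (fun k => (k : ℂ)), ← mul_assoc,
        ih (by omega), Nat.factorial_succ]
      push_cast; ring

lemma Hm_det_eq (p : Polynomial ℂ) (hp0 : p.coeff 0 = 0) :
    ∀ n, (Hm (cc p) n).det = (Nat.factorial n : ℂ) * Ep p n := by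
  have hc : cc p 0 = 0 := by simp [cc]
  intro n
  induction n using Nat.strong_induction_on with
  | _ n ih =>
    match n with
    | 0 => simp [Matrix.det_fin_zero, Ep, Nat.factorial]
    | m + 1 =>
      rw [Hm_det_succ _ hc m]
      have key : ∀ i ∈ Finset.range (m + 1),
          cc p (m + 1 - i) * (∏ k ∈ Finset.Ioc i m, (k : ℂ)) * (Hm (cc p) i).det =
          (Nat.factorial m : ℂ) * (cc p (m + 1 - i) * Ep p i) := by
        intro i hi
        have him : i ≤ m := by have := Finset.mem_range.mp hi; omega
        rw [ih i (by omega)]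
        have hfp := fact_prod (n := m) (i := i) him
        linear_combination (cc p (m + 1 - i) * Ep p i) * hfp
      rw [Finset.sum_congr rfl key, ← Finset.mul_sum, ← Ep_succ p hp0 m, Nat.factorial_succ]
      push_cast
      ring

/-- Macdonald's identity: for a polynomial `p` of degree `n` with zero constant term,
`det(X₀ + p'(Y₀)) = n! ⋅ [zⁿ] exp(p(z))`, where `[zⁿ] exp(p(z)) = ∑_{k≤n} [zⁿ](pᵏ)/k!`. -/
theorem det_X0_add_pderiv_Y0 (n : ℕ) (p : Polynomial ℂ)
    (hdeg : p.natDegree = n) (hp0 : p.coeff 0 = 0) :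
    (X0 n + Polynomial.aeval (Y0 n) p.derivative).det =
      (Nat.factorial n : ℂ) *
        ∑ k ∈ Finset.range (n + 1), (p ^ k).coeff n / (Nat.factorial k : ℂ) := by
  rw [matrix_eq_Hm, Hm_det_eq p hp0 n, Ep]
end

section
/- Let W be a ℂ-subspace of ℂ(z) and define the fractional right ideal R_W = {D ∈ ℂ(z)[∂] : D.ℂ[z] ⊆ W} and the fractional left ideal L_W = {D ∈ ℂ(z)[∂] : D.W ⊆ ℂ[z]} of the Weyl algebra A₁ = ℂ[z][∂]. If W satisfies W = {D.1 : D ∈ R_W}, then L_W equals the dual ideal (R_W)' = {q : q·R_W ⊆ A₁} (intersected with ℂ(z)[∂]). -/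
open scoped BigOperators

/-- `T` is a differential operator on `ℂ(z)` with rational coefficients, with respect to
the derivation `d = d/dz`. -/
def IsDiffOp (d : Derivation ℂ (RatFunc ℂ) (RatFunc ℂ)) (T : RatFunc ℂ → RatFunc ℂ) : Prop :=
  ∃ (N : ℕ) (a : ℕ → RatFunc ℂ),
    ∀ f, T f = ∑ i ∈ Finset.range N, a i * ((d.toLinearMap : Module.End ℂ (RatFunc ℂ)) ^ i) f

/-- `T` is a differential operator with polynomial coefficients, i.e. an element of the
Weyl algebra `A₁ = ℂ[z][∂]` acting on `ℂ(z)`. -/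
def IsPolyOp (d : Derivation ℂ (RatFunc ℂ) (RatFunc ℂ)) (T : RatFunc ℂ → RatFunc ℂ) : Prop :=
  ∃ (N : ℕ) (a : ℕ → Polynomial ℂ),
    ∀ f, T f = ∑ i ∈ Finset.range N,
      algebraMap (Polynomial ℂ) (RatFunc ℂ) (a i) *
        ((d.toLinearMap : Module.End ℂ (RatFunc ℂ)) ^ i) f

/-- The subalgebra `ℂ[z] ⊆ ℂ(z)`. -/
def Cz : Set (RatFunc ℂ) := Set.range (algebraMap (Polynomial ℂ) (RatFunc ℂ))

namespace Helper

variable (d : Derivation ℂ (RatFunc ℂ) (RatFunc ℂ))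

local notation "D" => (d.toLinearMap : Module.End ℂ (RatFunc ℂ))

lemma diffop_pad {T : RatFunc ℂ → RatFunc ℂ} {N M : ℕ} {a : ℕ → RatFunc ℂ}
    (h : N ≤ M) (rep : ∀ f, T f = ∑ i ∈ Finset.range N, a i * (D ^ i) f) :
    ∀ f, T f = ∑ i ∈ Finset.range M, (if i < N then a i else 0) * (D ^ i) f := by
  intro f
  have h1 : ∑ i ∈ Finset.range N, ((if i < N then a i else 0) * (D ^ i) f)
      = ∑ i ∈ Finset.range M, ((if i < N then a i else 0) * (D ^ i) f) := by
    refine Finset.sum_subset (Finset.range_subset_range.2 h) ?_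
    intro x _ hx'
    rw [Finset.mem_range] at hx'
    simp [hx']
  rw [rep f, ← h1]
  refine Finset.sum_congr rfl fun x hx => ?_
  rw [Finset.mem_range] at hx
  simp [hx]

lemma diffop_zero : IsDiffOp d (fun _ => 0) := ⟨0, fun _ => 0, by simp⟩

lemma diffop_add {T S : RatFunc ℂ → RatFunc ℂ} (hT : IsDiffOp d T) (hS : IsDiffOp d S) :
    IsDiffOp d (fun f => T f + S f) := by
  obtain ⟨N, a, ha⟩ := hT
  obtain ⟨M, b, hb⟩ := hS
  refine ⟨max N M, (fun i => (if i < N then a i else 0) + (if i < M then b i else 0)), fun f => ?_⟩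
  show T f + S f = _
  rw [diffop_pad d (le_max_left N M) ha f, diffop_pad d (le_max_right N M) hb f,
    ← Finset.sum_add_distrib]
  refine Finset.sum_congr rfl fun x _ => ?_
  ring

lemma diffop_mul_left (q : RatFunc ℂ) {T : RatFunc ℂ → RatFunc ℂ} (hT : IsDiffOp d T) :
    IsDiffOp d (fun f => q * T f) := by
  obtain ⟨N, a, ha⟩ := hT
  refine ⟨N, fun i => q * a i, fun f => ?_⟩
  show q * T f = _
  rw [ha f, Finset.mul_sum]
  refine Finset.sum_congr rfl fun x _ => ?_
  ring

lemma diffop_deriv {T : RatFunc ℂ → RatFunc ℂ} (hT : IsDiffOp d T) :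
    IsDiffOp d (fun f => d (T f)) := by
  obtain ⟨N, a, ha⟩ := hT
  refine ⟨N + 1, fun i => (if i < N then d (a i) else 0) +
      (if i = 0 then 0 else if i - 1 < N then a (i - 1) else 0), fun f => ?_⟩
  show d (T f) = _
  have key : d (T f) = ∑ i ∈ Finset.range N, (d (a i) * (D ^ i) f + a i * (D ^ (i + 1)) f) := by
    rw [ha f, map_sum]
    refine Finset.sum_congr rfl fun x _ => ?_
    rw [d.leibniz, smul_eq_mul, smul_eq_mul, pow_succ']
    rw [Module.End.mul_apply]
    have : D ((D ^ x) f) = d ((D ^ x) f) := rfl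
    rw [this]
    ring
  rw [key, Finset.sum_add_distrib]
  have p1 : ∑ i ∈ Finset.range N, d (a i) * (D ^ i) f
      = ∑ i ∈ Finset.range (N + 1), (if i < N then d (a i) else 0) * (D ^ i) f :=
    diffop_pad d (Nat.le_succ N) (fun _ => rfl)
      (T := fun g => ∑ i ∈ Finset.range N, d (a i) * (D ^ i) g) f
  have p2 : (∑ i ∈ Finset.range (N + 1),
          (if i = 0 then 0 else if i - 1 < N then a (i - 1) else 0) * (D ^ i) f)
      = ∑ i ∈ Finset.range N, a i * (D ^ (i + 1)) f := by
    rw [Finset.sum_range_succ']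
    simp only [Nat.add_sub_cancel, Nat.succ_ne_zero, if_false, eq_self_iff_true, if_true, zero_mul, add_zero]
    refine Finset.sum_congr rfl fun x hx => ?_
    rw [Finset.mem_range] at hx
    simp [hx]
  rw [p1, ← p2, ← Finset.sum_add_distrib]
  refine Finset.sum_congr rfl fun x _ => ?_
  ring

lemma diffop_pow_comp {E : RatFunc ℂ → RatFunc ℂ} (hE : IsDiffOp d E) (i : ℕ) :
    IsDiffOp d (fun f => (D ^ i) (E f)) := by
  induction i with
  | zero => simpa using hE
  | succ n ih =>
      have h1 : ∀ f, (D ^ (n+1)) (E f) = d ((D ^ n) (E f)) := by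
        intro f; rw [pow_succ', Module.End.mul_apply]; rfl
      simpa only [h1] using diffop_deriv d ih

lemma diffop_comp {T E : RatFunc ℂ → RatFunc ℂ} (hT : IsDiffOp d T) (hE : IsDiffOp d E) :
    IsDiffOp d (T ∘ E) := by
  obtain ⟨N, a, ha⟩ := hT
  have key : ∀ (M : ℕ), IsDiffOp d (fun f => ∑ i ∈ Finset.range M, a i * (D ^ i) (E f)) := by
    intro M
    induction M with
    | zero => simpa using diffop_zero d
    | succ n ih =>
        have := diffop_add d ih (diffop_mul_left d (a n) (diffop_pow_comp d hE n))
        simpa [Finset.sum_range_succ] using this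
  have h2 := key N
  have h3 : T ∘ E = fun f => ∑ i ∈ Finset.range N, a i * (D ^ i) (E f) := by
    funext f; exact ha (E f)
  rw [h3]; exact h2

end Helper

section Part2
variable (d : Derivation ℂ (RatFunc ℂ) (RatFunc ℂ))
local notation "D" => (d.toLinearMap : Module.End ℂ (RatFunc ℂ))

namespace Helper

lemma pow_X (hd : d RatFunc.X = 1) (k i : ℕ) :
    (D ^ i) (RatFunc.X ^ k) = (k.descFactorial i) • (RatFunc.X ^ (k - i) : RatFunc ℂ) := by
  induction i with
  | zero => simp
  | succ n ih =>
      rw [pow_succ', Module.End.mul_apply, ih, map_nsmul]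
      have h1 : D ((RatFunc.X : RatFunc ℂ) ^ (k - n)) = d ((RatFunc.X : RatFunc ℂ) ^ (k - n)) := rfl
      rw [h1, d.leibniz_pow, hd, smul_eq_mul, mul_one, smul_smul,
        Nat.sub_sub, Nat.mul_comm, ← Nat.descFactorial_succ]

lemma pow_one_val (i : ℕ) :
    (D ^ i) (1 : RatFunc ℂ) = if i = 0 then 1 else 0 := by
  induction i with
  | zero => simp
  | succ n ih =>
      rw [pow_succ, Module.End.mul_apply]
      have h1 : D (1 : RatFunc ℂ) = d 1 := rfl
      rw [h1, d.map_one_eq_zero, map_zero]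
      simp

end Helper
end Part2

section Part3
variable (d : Derivation ℂ (RatFunc ℂ) (RatFunc ℂ))
local notation "D" => (d.toLinearMap : Module.End ℂ (RatFunc ℂ))

namespace Helper

lemma Cz_mul {x y : RatFunc ℂ} (hx : x ∈ Cz) (hy : y ∈ Cz) : x * y ∈ Cz := by
  obtain ⟨p, rfl⟩ := hx; obtain ⟨q, rfl⟩ := hy; exact ⟨p * q, map_mul _ _ _⟩

lemma Cz_sub {x y : RatFunc ℂ} (hx : x ∈ Cz) (hy : y ∈ Cz) : x - y ∈ Cz := by
  obtain ⟨p, rfl⟩ := hx; obtain ⟨q, rfl⟩ := hy; exact ⟨p - q, map_sub _ _ _⟩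

lemma Cz_nsmul {x : RatFunc ℂ} (n : ℕ) (hx : x ∈ Cz) : n • x ∈ Cz := by
  obtain ⟨p, rfl⟩ := hx; exact ⟨n • p, map_nsmul _ _ _⟩

lemma Cz_smul {x : RatFunc ℂ} (c : ℂ) (hx : x ∈ Cz) : c • x ∈ Cz := by
  obtain ⟨p, rfl⟩ := hx
  refine ⟨Polynomial.C c * p, ?_⟩
  rw [map_mul, Algebra.smul_def, IsScalarTower.algebraMap_apply ℂ (Polynomial ℂ) (RatFunc ℂ)]
  rfl

lemma Cz_Xpow (m : ℕ) : (RatFunc.X ^ m : RatFunc ℂ) ∈ Cz :=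
  ⟨Polynomial.X ^ m, by rw [map_pow, RatFunc.algebraMap_X]⟩

lemma Cz_one : (1 : RatFunc ℂ) ∈ Cz := ⟨1, map_one _⟩

lemma Cz_sum {s : Finset ℕ} {g : ℕ → RatFunc ℂ} (h : ∀ i ∈ s, g i ∈ Cz) :
    ∑ i ∈ s, g i ∈ Cz := by
  classical
  induction s using Finset.induction_on with
  | empty => exact ⟨0, map_zero _⟩
  | @insert a' s' hni ih =>
      rw [Finset.sum_insert hni]
      obtain ⟨p, hp⟩ := h a' (Finset.mem_insert_self _ _)
      obtain ⟨q, hq⟩ := ih fun i hi => h i (Finset.mem_insert_of_mem hi)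
      exact ⟨p + q, by rw [map_add, hp, hq]⟩

lemma coeffs_mem (hd : d RatFunc.X = 1) {N : ℕ} {a : ℕ → RatFunc ℂ}
    (h : ∀ p ∈ Cz, (∑ i ∈ Finset.range N, a i * (D ^ i) p) ∈ Cz) :
    ∀ i < N, a i ∈ Cz := by
  intro i
  induction i using Nat.strong_induction_on with
  | _ i IH =>
    intro hiN
    have hs := h _ (Cz_Xpow i)
    have hshrink : ∑ j ∈ Finset.range N, a j * (D ^ j) ((RatFunc.X : RatFunc ℂ) ^ i)
        = ∑ j ∈ Finset.range (i + 1), a j * (D ^ j) ((RatFunc.X : RatFunc ℂ) ^ i) := by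
      refine (Finset.sum_subset (Finset.range_subset_range.2 hiN) ?_).symm
      intro x _ hx'
      rw [Finset.mem_range, not_lt] at hx'
      rw [pow_X d hd, Nat.descFactorial_eq_zero_iff_lt.2 (by omega), zero_smul, mul_zero]
    rw [hshrink, Finset.sum_range_succ] at hs
    have hterm : ∀ j ∈ Finset.range i, a j * (D ^ j) ((RatFunc.X : RatFunc ℂ) ^ i) ∈ Cz := by
      intro j hj
      rw [Finset.mem_range] at hj
      exact Cz_mul (IH j hj (hj.trans hiN)) (by rw [pow_X d hd]; exact Cz_nsmul _ (Cz_Xpow _))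
    have hlast : a i * (D ^ i) ((RatFunc.X : RatFunc ℂ) ^ i) ∈ Cz := by
      have := Cz_sub hs (Cz_sum hterm)
      simpa using this
    rw [pow_X d hd, Nat.sub_self, pow_zero, Nat.descFactorial_self, nsmul_eq_mul, mul_one] at hlast
    have h2 : a i * (i.factorial : RatFunc ℂ) = ((i.factorial : ℂ)) • a i := by
      rw [Algebra.smul_def, mul_comm]
      norm_num
    rw [h2] at hlast
    have h3 : a i = ((i.factorial : ℂ))⁻¹ • (((i.factorial : ℂ)) • a i) := by
      rw [inv_smul_smul₀ (by exact_mod_cast i.factorial_ne_zero)]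
    rw [h3]
    exact Cz_smul _ hlast

lemma isPolyOp_of (hd : d RatFunc.X = 1) {T : RatFunc ℂ → RatFunc ℂ}
    (hT : IsDiffOp d T) (h : ∀ f ∈ Cz, T f ∈ Cz) : IsPolyOp d T := by
  obtain ⟨N, a, ha⟩ := hT
  have hcz : ∀ i < N, a i ∈ Cz := by
    refine coeffs_mem d hd (fun p hp => ?_)
    rw [← ha p]; exact h p hp
  classical
  refine ⟨N, fun i => if hc : a i ∈ Cz then hc.choose else 0, fun f => ?_⟩
  rw [ha f]
  refine Finset.sum_congr rfl fun x hx => ?_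
  rw [Finset.mem_range] at hx
  have hbx : (algebraMap (Polynomial ℂ) (RatFunc ℂ))
      (if hc : a x ∈ Cz then hc.choose else 0) = a x := by
    rw [dif_pos (hcz x hx)]; exact (hcz x hx).choose_spec
  simp only [hbx]

end Helper
end Part3

/-- The fractional right ideal `R_W = {D ∈ ℂ(z)[∂] : D.ℂ[z] ⊆ W}` of `A₁ = ℂ[z][∂]`. -/
def RW (d : Derivation ℂ (RatFunc ℂ) (RatFunc ℂ)) (W : Submodule ℂ (RatFunc ℂ)) :
    Set (RatFunc ℂ → RatFunc ℂ) :=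
  {T | IsDiffOp d T ∧ ∀ f ∈ Cz, T f ∈ W}

/-- If `W ⊆ ℂ(z)` satisfies `W = {D.1 : D ∈ R_W}`, then the fractional left ideal
`L_W = {D ∈ ℂ(z)[∂] : D.W ⊆ ℂ[z]}` equals the dual ideal
`(R_W)' = {q ∈ ℂ(z)[∂] : q·R_W ⊆ A₁}`. -/
theorem LW_eq_dual_of_RW (d : Derivation ℂ (RatFunc ℂ) (RatFunc ℂ))
    (hd : d RatFunc.X = 1) (W : Submodule ℂ (RatFunc ℂ))
    (hW : (W : Set (RatFunc ℂ)) = (fun T : RatFunc ℂ → RatFunc ℂ => T 1) '' RW d W) :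
    {T : RatFunc ℂ → RatFunc ℂ | IsDiffOp d T ∧ ∀ f ∈ (W : Set (RatFunc ℂ)), T f ∈ Cz} =
      {T : RatFunc ℂ → RatFunc ℂ | IsDiffOp d T ∧ ∀ E ∈ RW d W, IsPolyOp d (T ∘ E)} := by
  ext T
  simp only [Set.mem_setOf_eq]
  constructor
  · rintro ⟨hT, hTW⟩
    refine ⟨hT, fun E hE => ?_⟩
    obtain ⟨hEdiff, hERW⟩ := hE
    exact Helper.isPolyOp_of d hd (Helper.diffop_comp d hT hEdiff)
      (fun f hf => hTW _ (hERW f hf))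
  · rintro ⟨hT, hdual⟩
    refine ⟨hT, fun w hw => ?_⟩
    rw [hW] at hw
    obtain ⟨E, hE, hE1⟩ := hw
    obtain ⟨N, b, hb⟩ := hdual E hE
    have h1 : T w = ∑ i ∈ Finset.range N,
        algebraMap (Polynomial ℂ) (RatFunc ℂ) (b i) * (if i = 0 then 1 else 0) := by
      rw [← hE1]
      have h2 := hb 1
      simp only [Function.comp_apply] at h2
      rw [h2]
      exact Finset.sum_congr rfl fun x _ => by rw [Helper.pow_one_val]
    have h3 : ∑ i ∈ Finset.range N,
        algebraMap (Polynomial ℂ) (RatFunc ℂ) (b i) * (if i = 0 then 1 else 0)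
        = if 0 ∈ Finset.range N then algebraMap (Polynomial ℂ) (RatFunc ℂ) (b 0) else 0 := by
      rw [← Finset.sum_ite_eq' (Finset.range N) 0
        (fun i => algebraMap (Polynomial ℂ) (RatFunc ℂ) (b i))]
      exact Finset.sum_congr rfl fun x _ => by split <;> simp_all
    rw [h1, h3]
    split
    · exact ⟨b 0, rfl⟩
    · exact ⟨0, map_zero _⟩
end
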